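/- arXiv:1008.4949 — 2 statements merged into one kernel-verified Lean document; each statement's English description precedes it below -/
import Mathlib

section
/- In the diagonal setting, let 𝒜 ⊆ D(A) contain at least two points, let C > 0, and let M₁ be a constant with M₁ ≥ 4 sup_{u ∈ 𝒜} ‖u‖ such that ‖A(u − v)‖ ≤ C ‖u − v‖ log(M₁²/‖u − v‖²) for all u,v ∈ 𝒜 with u ≠ v. Then for every n ≥ 0 there exists a map Φ_n : P_n H → Q_n H satisfying ‖Φ_n(p₁) − Φ_n(p₂)‖ ≤ ‖p₁ − p₂‖ for all p₁, p₂ ∈ P_n H, such that every u ∈ 𝒜 satisfies inf_{p ∈ P_n H} ‖u − (p + Φ_n(p))‖² ≤ 2 M₁² e^{−λ_{n+1}/(√2 C)}; that is, 𝒜 lies within a distance whose square is at most 2 M₁² e^{−λ_{n+1}/(√2 C)} of the graph G[Φ_n] = {p + Φ_n(p) : p ∈ P_n H}. -/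
open scoped RealInnerProductSpace

noncomputable section

variable {H : Type*} [NormedAddCommGroup H] [InnerProductSpace ℝ H]

/-- `A^α u = ∑_j λ_j^α ⟨u, w_j⟩ w_j` (fractional power of the diagonal operator). -/
def Apow (w : ℕ → H) (l : ℕ → ℝ) (α : ℝ) (u : H) : H :=
  ∑' j : ℕ, (l j ^ α * ⟪u, w j⟫) • w j

/-- The domain `D(A^α)`. -/
def Dom (w : ℕ → H) (l : ℕ → ℝ) (α : ℝ) : Set H :=
  {u | Summable fun j : ℕ => l j ^ (2 * α) * ⟪u, w j⟫ ^ 2}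

/-- `P_n u = ∑_{j=1}^n ⟨u, w_j⟩ w_j` (here `w` is indexed from `0`, so we sum over `j < n`). -/
def Pproj (w : ℕ → H) (n : ℕ) (u : H) : H :=
  ∑ j ∈ Finset.range n, ⟪u, w j⟫ • w j

set_option linter.unusedSectionVars false

lemma inner_sum_sum_helper (J : Finset H) (c : H → ℝ) (fvec : H → H) :
    ⟪∑ v ∈ J, c v • fvec v, ∑ v' ∈ J, c v' • fvec v'⟫
      = ∑ v ∈ J, ∑ v' ∈ J, c v * (c v' * ⟪fvec v, fvec v'⟫) := by
  rw [sum_inner]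
  refine Finset.sum_congr rfl fun v _ => ?_
  rw [real_inner_smul_left, inner_sum, Finset.mul_sum]
  refine Finset.sum_congr rfl fun v' _ => ?_
  rw [real_inner_smul_right]

lemma kirszbraun_fin {k : ℕ} (p q : Fin k → H)
    (hpq : ∀ i j, ‖q i - q j‖ ≤ ‖p i - p j‖) (x : H) :
    ∃ y : H, ∀ i, ‖y - q i‖ ≤ ‖x - p i‖ := by
  classical
  rcases Nat.eq_zero_or_pos k with hk | hk
  · subst hk; exact ⟨0, fun i => i.elim0⟩
  haveI : Nonempty (Fin k) := ⟨⟨0, hk⟩⟩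
  have hne : (Finset.univ : Finset (Fin k)).Nonempty := Finset.univ_nonempty
  set Kset := convexHull ℝ (Set.range q) with hKset
  have hKcpt : IsCompact Kset := (Set.finite_range q).isCompact_convexHull ℝ
  have hKconv : Convex ℝ Kset := convex_convexHull _ _
  have hKne : Kset.Nonempty :=
    ⟨q (Classical.arbitrary _), subset_convexHull _ _ (Set.mem_range_self _)⟩
  set G : Fin k → H → ℝ := fun i y => ‖y - q i‖ ^ 2 - ‖x - p i‖ ^ 2 with hG
  set F : H → ℝ := fun y => Finset.univ.sup' hne (fun i => G i y) with hF
  have hFcont : Continuous F := by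
    rw [continuous_iff_continuousAt]
    intro y
    exact ContinuousAt.finset_sup'_apply hne (fun i _ => by simp only [hG]; fun_prop)
  obtain ⟨y₀, hy₀K, hy₀min⟩ := hKcpt.exists_isMinOn hKne hFcont.continuousOn
  by_cases hm : F y₀ ≤ 0
  · refine ⟨y₀, fun i => ?_⟩
    have h1 : G i y₀ ≤ F y₀ := by
      simp only [hF]; exact Finset.le_sup' (fun i => G i y₀) (Finset.mem_univ i)
    simp only [hG] at h1
    nlinarith [norm_nonneg (y₀ - q i), norm_nonneg (x - p i)]
  push_neg at hm
  exfalso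
  set m := F y₀ with hmdef
  set I : Finset (Fin k) := Finset.univ.filter (fun i => G i y₀ = m) with hI
  have hIne : I.Nonempty := by
    obtain ⟨i, _, hi⟩ := Finset.exists_mem_eq_sup' hne (fun i => G i y₀)
    exact ⟨i, Finset.mem_filter.2 ⟨Finset.mem_univ _, hi.symm⟩⟩
  set J : Finset H := I.image q with hJ
  have hJne : J.Nonempty := hIne.image q
  set KI := convexHull ℝ (J : Set H) with hKI
  have hKIcpt : IsCompact KI := J.finite_toSet.isCompact_convexHull ℝ
  have hKIconv : Convex ℝ KI := convex_convexHull _ _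
  have hKIne : KI.Nonempty := hJne.to_set.mono (subset_convexHull _ _)
  have hKIsub : KI ⊆ Kset := by
    apply convexHull_mono
    intro v hv
    obtain ⟨i, _, rfl⟩ := Finset.mem_image.mp hv
    exact Set.mem_range_self _
  have hqKI : ∀ i ∈ I, q i ∈ KI := fun i hi =>
    subset_convexHull _ _ (Finset.mem_image_of_mem q hi)
  -- terms are ≤ m everywhere, and < m off I
  have hle : ∀ i, G i y₀ ≤ m := by
    intro i
    simp only [hmdef, hF]
    exact Finset.le_sup' (fun i => G i y₀) (Finset.mem_univ i)
  have hlt : ∀ i, i ∉ I → G i y₀ < m := by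
    intro i hi
    have : G i y₀ ≠ m := by
      intro h; exact hi (Finset.mem_filter.2 ⟨Finset.mem_univ _, h⟩)
    exact lt_of_le_of_ne (hle i) this
  -- Step (a): y₀ ∈ KI
  have hy₀KI : y₀ ∈ KI := by
    by_contra hy₀KI
    obtain ⟨z, hzKI, hz⟩ := exists_norm_eq_iInf_of_complete_convex hKIne
      hKIcpt.isComplete hKIconv y₀
    have hproj : ∀ v ∈ KI, ⟪y₀ - z, v - z⟫ ≤ 0 :=
      (norm_eq_iInf_iff_real_inner_le_zero hKIconv hzKI).mp hz
    have hzy : z ≠ y₀ := fun h => hy₀KI (h ▸ hzKI)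
    set u := z - y₀ with hu
    have hupos : 0 < ‖u‖ ^ 2 := by
      have h0 : 0 < ‖u‖ := norm_pos_iff.mpr (sub_ne_zero.2 hzy)
      positivity
    -- active terms decrease along y₀ + t u for t ∈ (0,1)
    have hactive : ∀ t : ℝ, 0 < t → t < 1 → ∀ i ∈ I, G i (y₀ + t • u) < m := by
      intro t ht0 ht1 i hiI
      have hiq : ⟪y₀ - q i, u⟫ ≤ -‖u‖ ^ 2 := by
        have h1 : ⟪y₀ - z, q i - z⟫ ≤ 0 := hproj _ (hqKI i hiI)
        have h2 : y₀ - q i = (y₀ - z) + (z - q i) := by abel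
        rw [h2, inner_add_left]
        have h3 : ⟪y₀ - z, u⟫ = -‖u‖^2 := by
          rw [hu, show y₀ - z = -(z - y₀) by abel, inner_neg_left,
            real_inner_self_eq_norm_sq]
        have h4 : ⟪z - q i, u⟫ ≤ 0 := by
          rw [hu, show z - q i = -(q i - z) from by abel,
            show z - y₀ = -(y₀ - z) from by abel, inner_neg_neg, real_inner_comm]
          exact h1
        linarith
      have hexp : G i (y₀ + t • u) = G i y₀ + 2 * t * ⟪y₀ - q i, u⟫ + t ^ 2 * ‖u‖ ^ 2 := by
        simp only [hG]
        have : y₀ + t • u - q i = (y₀ - q i) + t • u := by abel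
        rw [this, norm_add_sq_real, real_inner_smul_right, norm_smul]
        simp [Real.norm_eq_abs, mul_pow, sq_abs]
        ring
      have hGi : G i y₀ = m := (Finset.mem_filter.mp hiI).2
      have : G i (y₀ + t • u) ≤ m + (t ^ 2 - 2 * t) * ‖u‖ ^ 2 := by
        rw [hexp, hGi]; nlinarith
      have hneg : (t ^ 2 - 2 * t) * ‖u‖ ^ 2 < 0 := by
        have h2t : 0 < t * (2 - t) := mul_pos ht0 (by linarith)
        nlinarith [mul_pos h2t hupos]
      linarith
    -- inactive terms stay < m for small t
    have hev : ∀ᶠ t : ℝ in nhds 0, ∀ i ∈ Finset.univ \ I, G i (y₀ + t • u) < m := by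
      rw [Filter.eventually_all_finset]
      intro i hi
      have hc : Continuous fun t : ℝ => G i (y₀ + t • u) := by
        simp only [hG]; fun_prop
      have h0 : G i (y₀ + (0:ℝ) • u) < m := by
        have := hlt i (Finset.mem_sdiff.mp hi).2
        simpa using this
      have := hc.continuousAt (x := (0:ℝ))
      exact this.eventually_lt continuousAt_const h0
    obtain ⟨ε, hε, hball⟩ := Metric.eventually_nhds_iff.mp hev
    set t : ℝ := min (ε/2) (1/2) with htdef
    have ht0 : 0 < t := lt_min (by linarith) (by norm_num)
    have ht1 : t < 1 := lt_of_le_of_lt (min_le_right _ _) (by norm_num)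
    have htε : dist t 0 < ε := by
      rw [Real.dist_eq, sub_zero, abs_of_pos ht0]
      exact lt_of_le_of_lt (min_le_left _ _) (by linarith)
    have hall : ∀ i, G i (y₀ + t • u) < m := by
      intro i
      by_cases hiI : i ∈ I
      · exact hactive t ht0 ht1 i hiI
      · exact hball htε i (Finset.mem_sdiff.2 ⟨Finset.mem_univ _, hiI⟩)
    have hy'K : y₀ + t • u ∈ Kset := by
      have hcomb : y₀ + t • u = (1-t) • y₀ + t • z := by
        rw [hu]; simp [smul_sub, sub_smul]; abel
      rw [hcomb]
      exact hKconv hy₀K (hKIsub hzKI) (by linarith) (le_of_lt ht0) (by ring)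
    have hFy' : F (y₀ + t • u) < m := by
      simp only [hF]
      rw [Finset.sup'_lt_iff]
      exact fun i _ => hall i
    have := hy₀min hy'K
    simp only [Set.mem_setOf_eq] at this
    have : m ≤ F (y₀ + t • u) := this
    linarith
  -- Step (b): contradiction from y₀ ∈ KI
  rw [hKI, Finset.convexHull_eq] at hy₀KI
  obtain ⟨wgt, hwgt0, hwgt1, hwcm⟩ := hy₀KI
  rw [Finset.centerMass_eq_of_sum_1 _ _ hwgt1] at hwcm
  have hch : ∀ v : H, ∃ i : Fin k, v ∈ J → (i ∈ I ∧ q i = v) := by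
    intro v
    by_cases hv : v ∈ J
    · obtain ⟨i, hi, hqi⟩ := Finset.mem_image.mp hv
      exact ⟨i, fun _ => ⟨hi, hqi⟩⟩
    · exact ⟨Classical.arbitrary _, fun h => absurd h hv⟩
  choose g hg using hch
  have hact : ∀ v ∈ J, ‖v - y₀‖^2 = m + ‖x - p (g v)‖^2 := by
    intro v hv
    obtain ⟨hgI, hgq⟩ := hg v hv
    have := (Finset.mem_filter.mp hgI).2
    simp only [hG] at this
    have hnorm : ‖v - y₀‖ = ‖y₀ - q (g v)‖ := by
      rw [hgq]; exact norm_sub_rev _ _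
    rw [hnorm]; linarith
  have hpair : ∀ v ∈ J, ∀ v' ∈ J,
      m + ⟪x - p (g v), x - p (g v')⟫ ≤ ⟪v - y₀, v' - y₀⟫ := by
    intro v hv v' hv'
    have h1 := hact v hv
    have h2 := hact v' hv'
    have h3 : ‖(v - y₀) - (v' - y₀)‖ ≤ ‖p (g v) - p (g v')‖ := by
      have heq : (v - y₀) - (v' - y₀) = q (g v) - q (g v') := by
        rw [(hg v hv).2, (hg v' hv').2]; abel
      rw [heq]; exact hpq _ _
    have h3sq : ‖(v - y₀) - (v' - y₀)‖^2 ≤ ‖p (g v) - p (g v')‖^2 :=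
      pow_le_pow_left₀ (norm_nonneg _) h3 2
    have e1 := norm_sub_sq_real (v - y₀) (v' - y₀)
    have e2 := norm_sub_sq_real (x - p (g v)) (x - p (g v'))
    have e3 : (x - p (g v)) - (x - p (g v')) = -(p (g v) - p (g v')) := by abel
    rw [e3, norm_neg] at e2
    linarith
  have hsum0 : ∑ v ∈ J, wgt v • (v - y₀) = 0 := by
    simp only [smul_sub]
    rw [Finset.sum_sub_distrib, ← Finset.sum_smul, hwgt1, one_smul]
    simp only [id] at hwcm
    rw [hwcm]; abel
  have hdouble : (0:ℝ) = ∑ v ∈ J, ∑ v' ∈ J, wgt v * (wgt v' * ⟪v - y₀, v' - y₀⟫) := by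
    have h0 : (0:ℝ) = ⟪∑ v ∈ J, wgt v • (v - y₀), ∑ v' ∈ J, wgt v' • (v' - y₀)⟫ := by
      rw [hsum0, inner_zero_left]
    rw [h0]
    exact inner_sum_sum_helper J wgt (fun v => v - y₀)
  have hquad : ∑ v ∈ J, ∑ v' ∈ J, wgt v * (wgt v' * ⟪x - p (g v), x - p (g v')⟫)
      = ‖∑ v ∈ J, wgt v • (x - p (g v))‖^2 := by
    rw [← real_inner_self_eq_norm_sq]
    exact (inner_sum_sum_helper J wgt (fun v => x - p (g v))).symm
  have hmsum : ∑ v ∈ J, ∑ v' ∈ J, wgt v * (wgt v' * m) = m := by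
    have : ∀ v ∈ J, ∑ v' ∈ J, wgt v * (wgt v' * m) = wgt v * m := by
      intro v _
      rw [← Finset.mul_sum, ← Finset.sum_mul, hwgt1, one_mul]
    rw [Finset.sum_congr rfl this, ← Finset.sum_mul, hwgt1, one_mul]
  have hcomp : ∑ v ∈ J, ∑ v' ∈ J, wgt v * (wgt v' * (m + ⟪x - p (g v), x - p (g v')⟫))
      ≤ ∑ v ∈ J, ∑ v' ∈ J, wgt v * (wgt v' * ⟪v - y₀, v' - y₀⟫) := by
    refine Finset.sum_le_sum (fun v hv => Finset.sum_le_sum (fun v' hv' => ?_))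
    have h := hpair v hv v' hv'
    have h0v := hwgt0 v hv
    have h0v' := hwgt0 v' hv'
    have := mul_le_mul_of_nonneg_left h h0v'
    exact mul_le_mul_of_nonneg_left this h0v
  have hsplit : ∑ v ∈ J, ∑ v' ∈ J, wgt v * (wgt v' * (m + ⟪x - p (g v), x - p (g v')⟫))
      = (∑ v ∈ J, ∑ v' ∈ J, wgt v * (wgt v' * m))
        + ∑ v ∈ J, ∑ v' ∈ J, wgt v * (wgt v' * ⟪x - p (g v), x - p (g v')⟫) := by
    rw [← Finset.sum_add_distrib]
    refine Finset.sum_congr rfl (fun v hv => ?_)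
    rw [← Finset.sum_add_distrib]
    refine Finset.sum_congr rfl (fun v' hv' => ?_)
    ring
  have hnn : (0:ℝ) ≤ ‖∑ v ∈ J, wgt v • (x - p (g v))‖^2 := sq_nonneg _
  rw [hsplit, hmsum, hquad] at hcomp
  linarith [hcomp, hdouble]

lemma kirszbraun_seq [CompleteSpace H] (s q : ℕ → H)
    (hpq : ∀ i j, ‖q i - q j‖ ≤ ‖s i - s j‖) (x : H) :
    ∃ y : H, ∀ i, ‖y - q i‖ ≤ ‖x - s i‖ := by
  classical
  set C : ℕ → Set H := fun K => ⋂ i ∈ Finset.range (K+1), Metric.closedBall (q i) ‖x - s i‖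
    with hC
  have hCmem : ∀ K y, y ∈ C K ↔ ∀ i ≤ K, ‖y - q i‖ ≤ ‖x - s i‖ := by
    intro K y
    simp only [hC, Set.mem_iInter, Metric.mem_closedBall, Finset.mem_range, dist_eq_norm,
      Nat.lt_succ_iff]
  have hCne : ∀ K, (C K).Nonempty := by
    intro K
    obtain ⟨y, hy⟩ := kirszbraun_fin (fun i : Fin (K+1) => s i) (fun i : Fin (K+1) => q i)
      (fun i j => hpq i j) x
    refine ⟨y, (hCmem K y).2 fun i hi => ?_⟩
    exact hy ⟨i, Nat.lt_succ_of_le hi⟩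
  have hCclosed : ∀ K, IsClosed (C K) :=
    fun K => isClosed_biInter (fun i _ => Metric.isClosed_closedBall)
  have hCconv : ∀ K, Convex ℝ (C K) :=
    fun K => convex_iInter₂ (fun i _ => convex_closedBall _ _)
  have hCanti : ∀ {K L : ℕ}, K ≤ L → C L ⊆ C K := by
    intro K L hKL y hy
    rw [hCmem] at hy ⊢
    exact fun i hi => hy i (le_trans hi hKL)
  have hmin : ∀ K : ℕ, ∃ v, v ∈ C K ∧ ‖v‖ = ⨅ w : C K, ‖(w:H)‖ := by
    intro K
    obtain ⟨v, hv, he⟩ := exists_norm_eq_iInf_of_complete_convex (hCne K)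
      ((hCclosed K).isComplete) (hCconv K) 0
    refine ⟨v, hv, ?_⟩
    simpa [zero_sub, norm_neg] using he
  choose yK hyKmem hyKinf using hmin
  have hminle : ∀ K, ∀ v ∈ C K, ‖yK K‖ ≤ ‖v‖ := by
    intro K v hv
    rw [hyKinf K]
    exact ciInf_le ⟨0, by rintro r ⟨w, rfl⟩; exact norm_nonneg _⟩ (⟨v, hv⟩ : C K)
  set r : ℕ → ℝ := fun K => ‖yK K‖ with hr
  have hrmono : Monotone r := fun K L h => hminle K (yK L) (hCanti h (hyKmem L))
  set B : ℝ := ‖q 0‖ + ‖x - s 0‖ with hB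
  have hrbdd : ∀ K, r K ≤ B := by
    intro K
    have h0 : ‖yK K - q 0‖ ≤ ‖x - s 0‖ := (hCmem K _).1 (hyKmem K) 0 (Nat.zero_le _)
    calc r K = ‖yK K - q 0 + q 0‖ := by rw [hr]; ring_nf; rw [sub_add_cancel]
    _ ≤ ‖yK K - q 0‖ + ‖q 0‖ := norm_add_le _ _
    _ ≤ B := by rw [hB]; linarith
  have hbddA : BddAbove (Set.range r) := ⟨B, by rintro ρ ⟨K, rfl⟩; exact hrbdd K⟩
  set mlim := ⨆ K, r K with hmlim
  have hconv : Filter.Tendsto r Filter.atTop (nhds mlim) := tendsto_atTop_ciSup hrmono hbddA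
  have hrle : ∀ K, r K ≤ mlim := fun K => le_ciSup hbddA K
  have hrnn : ∀ K, 0 ≤ r K := fun K => norm_nonneg _
  have hmlimnn : 0 ≤ mlim := le_trans (hrnn 0) (hrle 0)
  set b : ℕ → ℝ := fun N => Real.sqrt (2 * (mlim^2 - r N ^2)) with hb
  have haux : ∀ K L, K ≤ L → ‖yK K - yK L‖^2 ≤ 2 * (mlim^2 - r K ^ 2) := by
    intro K L hKL
    have hLK : yK L ∈ C K := hCanti hKL (hyKmem L)
    have hmid : (1/2 : ℝ) • yK K + (1/2 : ℝ) • yK L ∈ C K :=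
      hCconv K (hyKmem K) hLK (by norm_num) (by norm_num) (by norm_num)
    have h1 : r K ≤ ‖(1/2 : ℝ) • yK K + (1/2 : ℝ) • yK L‖ := hminle K _ hmid
    have h2 : ‖(1/2 : ℝ) • yK K + (1/2 : ℝ) • yK L‖ = (1/2) * ‖yK K + yK L‖ := by
      rw [← smul_add, norm_smul]
      simp [Real.norm_eq_abs]
    have hpar := parallelogram_law_with_norm ℝ (yK K) (yK L)
    have h3 : r L ≤ mlim := hrle L
    have h4 : 0 ≤ r L := hrnn L
    have h5 : r K ≤ r L := hrmono hKL
    have h6 : 2 * r K ≤ ‖yK K + yK L‖ := by rw [h2] at h1; linarith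
    nlinarith [norm_nonneg (yK K + yK L), hrnn K, sq_nonneg (‖yK K - yK L‖)]
  have hcauchy : CauchySeq yK := by
    apply cauchySeq_of_le_tendsto_0 b
    · intro K L N hNK hNL
      have hkey : ‖yK K - yK L‖^2 ≤ 2 * (mlim^2 - r N ^ 2) := by
        rcases le_total K L with h | h
        · calc ‖yK K - yK L‖^2 ≤ 2 * (mlim^2 - r K ^ 2) := haux K L h
          _ ≤ 2 * (mlim^2 - r N ^ 2) := by nlinarith [hrmono hNK, hrnn N]
        · rw [← norm_neg, neg_sub]
          calc ‖yK L - yK K‖^2 ≤ 2 * (mlim^2 - r L ^ 2) := haux L K h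
          _ ≤ 2 * (mlim^2 - r N ^ 2) := by nlinarith [hrmono hNL, hrnn N]
      calc dist (yK K) (yK L) = √(‖yK K - yK L‖^2) := by
            rw [Real.sqrt_sq (norm_nonneg _), dist_eq_norm]
      _ ≤ b N := Real.sqrt_le_sqrt hkey
    · have h0 : Filter.Tendsto (fun N => 2 * (mlim^2 - r N ^2)) Filter.atTop (nhds 0) := by
        have := ((hconv.pow 2).const_sub (mlim^2)).const_mul 2
        simpa using this
      simpa only [Real.sqrt_zero] using h0.sqrt
  obtain ⟨ylim, hylim⟩ := cauchySeq_tendsto_of_complete hcauchy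
  have hmemlim : ∀ K, ylim ∈ C K := by
    intro K
    apply (hCclosed K).mem_of_tendsto hylim
    filter_upwards [Filter.eventually_ge_atTop K] with L hL
    exact hCanti hL (hyKmem L)
  exact ⟨ylim, fun i => (hCmem i ylim).1 (hmemlim i) i le_rfl⟩

noncomputable def covRec {α : Type*} [Nonempty α] (nxt : (k : ℕ) → (ℕ → α) → α) : ℕ → α
  | k => nxt k (fun j => if _h : j < k then covRec nxt j else Classical.arbitrary α)
  termination_by k => k

lemma covRec_eq {α : Type*} [Nonempty α] (nxt : (k : ℕ) → (ℕ → α) → α) (k : ℕ) :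
    covRec nxt k = nxt k (fun j => if _h : j < k then covRec nxt j else Classical.arbitrary α) := by
  rw [covRec]

lemma exists_dense_seq {s : Set H} (hsep : TopologicalSpace.IsSeparable s) (hne : s.Nonempty) :
    ∃ e : ℕ → H, (∀ i, e i ∈ s) ∧ ∀ p ∈ s, ∀ ε : ℝ, 0 < ε → ∃ i, ‖e i - p‖ < ε := by
  haveI := hsep.separableSpace
  haveI := hne.to_subtype
  obtain ⟨t, htc, htd⟩ := TopologicalSpace.exists_countable_dense ↥s
  have htne : t.Nonempty := htd.nonempty
  have h2 : (Subtype.val '' t).Countable := htc.image _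
  have h3 : (Subtype.val '' t).Nonempty := htne.image _
  obtain ⟨e, he⟩ := h2.exists_eq_range h3
  refine ⟨e, ?_, ?_⟩
  · intro i
    have : e i ∈ Subtype.val '' t := he ▸ Set.mem_range_self i
    obtain ⟨⟨a, ha⟩, _, rfl⟩ := this
    exact ha
  · intro p hp ε hε
    have hcl : (⟨p, hp⟩ : ↥s) ∈ closure t := htd _
    rw [Metric.mem_closure_iff] at hcl
    obtain ⟨b, hbt, hdist⟩ := hcl ε hε
    have : (b : H) ∈ Set.range e := he ▸ Set.mem_image_of_mem _ hbt
    obtain ⟨i, hi⟩ := this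
    refine ⟨i, ?_⟩
    have : dist p (b : H) < ε := by rwa [Subtype.dist_eq] at hdist
    rw [← hi] at this
    rw [← dist_eq_norm, dist_comm]
    exact this

lemma lipschitz_extend [CompleteSpace H] {S V : Set H} (hSV : S ⊆ V)
    (hVsep : TopologicalSpace.IsSeparable V) (hSne : S.Nonempty) (f : H → H)
    (hf : ∀ a ∈ S, ∀ b ∈ S, ‖f a - f b‖ ≤ ‖a - b‖) :
    ∃ F : H → H, (∀ a ∈ V, ∀ b ∈ V, ‖F a - F b‖ ≤ ‖a - b‖) ∧ ∀ a ∈ S, F a = f a := by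
  classical
  obtain ⟨e, he1, he2⟩ := exists_dense_seq (hVsep.mono hSV) hSne
  obtain ⟨d, hd1, hd2⟩ := exists_dense_seq hVsep (hSne.mono hSV)
  set q : ℕ → H := fun i => f (e i) with hq
  have hee : ∀ i i', ‖q i - q i'‖ ≤ ‖e i - e i'‖ := fun i i' => hf _ (he1 i) _ (he1 i')
  set nxt : (k : ℕ) → (ℕ → H) → H := fun k prev =>
    if h : ∃ y : H, (∀ i, ‖y - q i‖ ≤ ‖d k - e i‖) ∧ (∀ j, j < k → ‖y - prev j‖ ≤ ‖d k - d j‖)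
    then h.choose else 0 with hnxt
  set Y : ℕ → H := covRec nxt with hY
  -- the invariant
  have hInv : ∀ k, (∀ i, ‖Y k - q i‖ ≤ ‖d k - e i‖) ∧
      (∀ j, j < k → ‖Y k - Y j‖ ≤ ‖d k - d j‖) := by
    intro k
    induction k using Nat.strong_induction_on with
    | _ k IH =>
      have hcross : ∀ j, j < k → ∀ i, ‖Y j - q i‖ ≤ ‖d j - e i‖ := fun j hj i => (IH j hj).1 i
      have hoo : ∀ j, j < k → ∀ j', j' < k → ‖Y j - Y j'‖ ≤ ‖d j - d j'‖ := by
        intro j hj j' hj'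
        rcases lt_trichotomy j j' with h | rfl | h
        · rw [norm_sub_rev (Y j), norm_sub_rev (d j)]
          exact (IH j' hj').2 j h
        · simp
        · exact (IH j hj).2 j' h
      set prev : ℕ → H := fun j => if _h : j < k then covRec nxt j else Classical.arbitrary H
        with hprev
      have hprevj : ∀ j, j < k → prev j = Y j := by
        intro j hj; simp only [hprev, dif_pos hj, hY]
      -- combined constraint family
      set τ : ℕ → H × H := fun m =>
        if Even m then (e (m/2), q (m/2))
        else if m/2 < k then (d (m/2), Y (m/2)) else (e 0, q 0) with hτ
      have hclass : ∀ m, (∃ i, τ m = (e i, q i)) ∨ (∃ j, j < k ∧ τ m = (d j, Y j)) := by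
        intro m
        by_cases hm : Even m
        · exact Or.inl ⟨m/2, by simp [hτ, hm]⟩
        · by_cases hmk : m/2 < k
          · exact Or.inr ⟨m/2, hmk, by simp [hτ, hm, hmk]⟩
          · exact Or.inl ⟨0, by simp [hτ, hm, hmk]⟩
      have hpw : ∀ a b, ‖(τ a).2 - (τ b).2‖ ≤ ‖(τ a).1 - (τ b).1‖ := by
        intro a b
        rcases hclass a with ⟨i, hi⟩ | ⟨j, hj, hj2⟩ <;>
          rcases hclass b with ⟨i', hi'⟩ | ⟨j', hj', hj2'⟩
        · rw [hi, hi']; exact hee i i'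
        · rw [hi, hj2']
          simp only
          rw [norm_sub_rev (q i), norm_sub_rev (e i)]
          exact hcross j' hj' i
        · rw [hj2, hi']; exact hcross j hj i'
        · rw [hj2, hj2']; exact hoo j hj j' hj'
      obtain ⟨y, hy⟩ := kirszbraun_seq (fun m => (τ m).1) (fun m => (τ m).2) hpw (d k)
      have hex : ∃ y : H, (∀ i, ‖y - q i‖ ≤ ‖d k - e i‖) ∧
          (∀ j, j < k → ‖y - prev j‖ ≤ ‖d k - d j‖) := by
        refine ⟨y, fun i => ?_, fun j hj => ?_⟩
        · have := hy (2*i)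
          have h2i : τ (2*i) = (e i, q i) := by
            simp [hτ, even_two_mul, Nat.mul_div_cancel_left i two_pos]
          rw [h2i] at this
          exact this
        · have := hy (2*j+1)
          have h2j : τ (2*j+1) = (d j, Y j) := by
            have hodd : ¬ Even (2*j+1) := by simp [Nat.even_add_one, even_two_mul]
            have hdiv : (2*j+1)/2 = j := by omega
            simp [hτ, hodd, hdiv, hj]
          rw [h2j] at this
          rw [hprevj j hj]
          simpa using this
      have hYk : Y k = hex.choose := by
        rw [hY, covRec_eq, ← hprev, hnxt]
        simp only
        rw [dif_pos hex]
      have hspec := hex.choose_spec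
      rw [← hYk] at hspec
      refine ⟨hspec.1, fun j hj => ?_⟩
      have := hspec.2 j hj
      rwa [hprevj j hj] at this
  -- global data sequence
  set t : ℕ → H := fun m => if Even m then e (m/2) else d (m/2) with ht
  set Z : ℕ → H := fun m => if Even m then q (m/2) else Y (m/2) with hZ
  have hcross : ∀ j i, ‖Y j - q i‖ ≤ ‖d j - e i‖ := fun j i => (hInv j).1 i
  have hoo : ∀ j j', ‖Y j - Y j'‖ ≤ ‖d j - d j'‖ := by
    intro j j'
    rcases lt_trichotomy j j' with h | rfl | h
    · rw [norm_sub_rev (Y j), norm_sub_rev (d j)]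
      exact (hInv j').2 j h
    · simp
    · exact (hInv j).2 j' h
  have hclass : ∀ m, (∃ i, t m = e i ∧ Z m = q i) ∨ (∃ j, t m = d j ∧ Z m = Y j) := by
    intro m
    by_cases hm : Even m
    · exact Or.inl ⟨m/2, by simp [ht, hm], by simp [hZ, hm]⟩
    · exact Or.inr ⟨m/2, by simp [ht, hm], by simp [hZ, hm]⟩
  have hglob : ∀ a b, ‖Z a - Z b‖ ≤ ‖t a - t b‖ := by
    intro a b
    rcases hclass a with ⟨i, hi1, hi2⟩ | ⟨j, hj1, hj2⟩ <;>
      rcases hclass b with ⟨i', hi1', hi2'⟩ | ⟨j', hj1', hj2'⟩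
    · rw [hi1, hi2, hi1', hi2']; exact hee i i'
    · rw [hi1, hi2, hj1', hj2']
      rw [norm_sub_rev (q i), norm_sub_rev (e i)]
      exact hcross j' i
    · rw [hj1, hj2, hi1', hi2']; exact hcross j i'
    · rw [hj1, hj2, hj1', hj2']; exact hoo j j'
  have htev : ∀ i, t (2*i) = e i ∧ Z (2*i) = q i := by
    intro i
    constructor <;> simp [ht, hZ, even_two_mul, Nat.mul_div_cancel_left i two_pos]
  have htdense : ∀ pv ∈ V, ∀ ε : ℝ, 0 < ε → ∃ m, ‖t m - pv‖ < ε := by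
    intro pv hpv ε hε
    obtain ⟨i, hi⟩ := hd2 pv hpv ε hε
    refine ⟨2*i+1, ?_⟩
    have hodd : ¬ Even (2*i+1) := by simp [Nat.even_add_one, even_two_mul]
    have hdiv : (2*i+1)/2 = i := by omega
    simp only [ht, hodd, if_false, hdiv]
    exact hi
  -- pointwise limits
  have hmain : ∀ pv, pv ∈ V → ∃ yp : H, ∀ ε : ℝ, 0 < ε →
      ∃ m, ‖t m - pv‖ < ε ∧ ‖Z m - yp‖ < ε := by
    intro pv hpv
    have hselx : ∀ j : ℕ, ∃ m, ‖t m - pv‖ < 1/(j+1) := fun j =>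
      htdense pv hpv _ (by positivity)
    choose sel hsel using hselx
    have hcau : CauchySeq (fun j => Z (sel j)) := by
      apply cauchySeq_of_le_tendsto_0 (fun N : ℕ => 2/(N+1))
      · intro j j' N hNj hNj'
        rw [dist_eq_norm]
        have h1 : ‖Z (sel j) - Z (sel j')‖ ≤ ‖t (sel j) - t (sel j')‖ := hglob _ _
        have h2 : ‖t (sel j) - t (sel j')‖ ≤ ‖t (sel j) - pv‖ + ‖t (sel j') - pv‖ := by
          have : t (sel j) - t (sel j') = (t (sel j) - pv) - (t (sel j') - pv) := by abel
          rw [this]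
          exact norm_sub_le _ _
        have h3 : (1:ℝ)/(j+1) ≤ 1/(N+1) := by
          apply one_div_le_one_div_of_le (by positivity)
          exact_mod_cast by omega
        have h4 : (1:ℝ)/(j'+1) ≤ 1/(N+1) := by
          apply one_div_le_one_div_of_le (by positivity)
          exact_mod_cast by omega
        have := hsel j
        have := hsel j'
        calc ‖Z (sel j) - Z (sel j')‖ ≤ ‖t (sel j) - pv‖ + ‖t (sel j') - pv‖ :=
              le_trans h1 h2
        _ ≤ 2/(N+1) := by
          have e1 := hsel j
          have e2 := hsel j'
          have : (2:ℝ)/(N+1) = 1/(N+1) + 1/(N+1) := by ring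
          rw [this]
          linarith
      · have hbase := tendsto_const_div_atTop_nhds_zero_nat (2:ℝ)
        have h := hbase.comp (Filter.tendsto_add_atTop_nat 1)
        have heq : (fun N : ℕ => (2:ℝ)/(N+1)) = ((fun n : ℕ => (2:ℝ)/n) ∘ fun a => a + 1) := by
          funext N
          show (2:ℝ)/(N+1) = 2/((N+1:ℕ):ℝ)
          push_cast
          ring
        rw [heq]
        exact h
    obtain ⟨yp, hyp⟩ := cauchySeq_tendsto_of_complete hcau
    refine ⟨yp, fun ε hε => ?_⟩
    have h1 : ∀ᶠ j : ℕ in Filter.atTop, dist (Z (sel j)) yp < ε :=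
      hyp.eventually (Metric.ball_mem_nhds yp hε)
    obtain ⟨nn, hnn⟩ := exists_nat_one_div_lt hε
    have h2 : ∀ᶠ j : ℕ in Filter.atTop, (1:ℝ)/(j+1) < ε := by
      filter_upwards [Filter.eventually_ge_atTop nn] with j hj
      have : (1:ℝ)/(j+1) ≤ 1/(nn+1) := by
        apply one_div_le_one_div_of_le (by positivity)
        exact_mod_cast by omega
      linarith
    obtain ⟨j, hj1, hj2⟩ := (h1.and h2).exists
    refine ⟨sel j, lt_trans (hsel j) hj2, ?_⟩
    rw [← dist_eq_norm]
    exact hj1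
  choose Fv hFv using hmain
  refine ⟨fun pv => if h : pv ∈ V then Fv pv h else 0, ?_, ?_⟩
  · intro a ha b hb
    simp only [dif_pos ha, dif_pos hb]
    apply le_of_forall_pos_le_add
    intro ε hε
    obtain ⟨ma, hma1, hma2⟩ := hFv a ha (ε/4) (by linarith)
    obtain ⟨mb, hmb1, hmb2⟩ := hFv b hb (ε/4) (by linarith)
    have htr : ‖Fv a ha - Fv b hb‖ ≤ ‖Fv a ha - Z ma‖ + ‖Z ma - Z mb‖ + ‖Z mb - Fv b hb‖ := by
      have e1 : Fv a ha - Fv b hb = (Fv a ha - Z ma) + (Z ma - Z mb) + (Z mb - Fv b hb) := by abel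
      rw [e1]
      exact le_trans (norm_add_le _ _) (by linarith [norm_add_le (Fv a ha - Z ma) (Z ma - Z mb)])
    have h2 : ‖Z ma - Z mb‖ ≤ ‖t ma - t mb‖ := hglob _ _
    have h3 : ‖t ma - t mb‖ ≤ ‖t ma - a‖ + ‖a - b‖ + ‖b - t mb‖ := by
      have e1 : t ma - t mb = (t ma - a) + (a - b) + (b - t mb) := by abel
      rw [e1]
      exact le_trans (norm_add_le _ _) (by linarith [norm_add_le (t ma - a) (a - b)])
    have h4 : ‖Fv a ha - Z ma‖ < ε/4 := by rw [norm_sub_rev]; exact hma2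
    have h5 : ‖b - t mb‖ < ε/4 := by rw [norm_sub_rev]; exact hmb1
    linarith
  · intro a ha
    have haV := hSV ha
    simp only [dif_pos haV]
    have hbound : ∀ ε : ℝ, 0 < ε → ‖Fv a haV - f a‖ ≤ ε := by
      intro ε hε
      obtain ⟨m, hm1, hm2⟩ := hFv a haV (ε/4) (by linarith)
      obtain ⟨i, hi⟩ := he2 a ha (ε/4) (by linarith)
      obtain ⟨hte, hZq⟩ := htev i
      have h1 : ‖Z m - q i‖ ≤ ‖t m - e i‖ := by
        rw [← hte, ← hZq]; exact hglob m (2*i)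
      have h2 : ‖t m - e i‖ ≤ ‖t m - a‖ + ‖e i - a‖ := by
        have e1 : t m - e i = (t m - a) - (e i - a) := by abel
        rw [e1]; exact norm_sub_le _ _
      have h3 : ‖q i - f a‖ ≤ ‖e i - a‖ := hf _ (he1 i) _ ha
      have htr : ‖Fv a haV - f a‖ ≤ ‖Fv a haV - Z m‖ + ‖Z m - q i‖ + ‖q i - f a‖ := by
        have e1 : Fv a haV - f a = (Fv a haV - Z m) + (Z m - q i) + (q i - f a) := by abel
        rw [e1]
        exact le_trans (norm_add_le _ _) (by linarith [norm_add_le (Fv a haV - Z m) (Z m - q i)])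
      have h4 : ‖Fv a haV - Z m‖ < ε/4 := by rw [norm_sub_rev]; exact hm2
      linarith
    have : ‖Fv a haV - f a‖ ≤ 0 := by
      by_contra hcon
      push_neg at hcon
      have := hbound (‖Fv a haV - f a‖/2) (by linarith)
      linarith
    have := le_antisymm this (norm_nonneg _)
    exact sub_eq_zero.mp (norm_eq_zero.mp this)

section basic
variable (w : ℕ → H) (n : ℕ)

lemma Pproj_sub (u v : H) : Pproj w n (u - v) = Pproj w n u - Pproj w n v := by
  simp [Pproj, inner_sub_left, sub_smul, Finset.sum_sub_distrib]

lemma Pproj_inner (hw : Orthonormal ℝ w) (u : H) (i : ℕ) :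
    ⟪Pproj w n u, w i⟫ = if i < n then ⟪u, w i⟫ else 0 := by
  rw [Pproj, sum_inner]
  have : ∀ j ∈ Finset.range n, ⟪(⟪u, w j⟫ : ℝ) • w j, w i⟫
      = if j = i then ⟪u, w j⟫ else 0 := by
    intro j _
    rw [real_inner_smul_left, orthonormal_iff_ite.mp hw j i]
    simp [mul_ite]
  rw [Finset.sum_congr rfl this, Finset.sum_ite_eq' (Finset.range n) i]
  simp [Finset.mem_range]

lemma Pproj_idem (hw : Orthonormal ℝ w) (u : H) :
    Pproj w n (Pproj w n u) = Pproj w n u := by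
  have h : Pproj w n (Pproj w n u) = ∑ j ∈ Finset.range n, ⟪Pproj w n u, w j⟫ • w j := rfl
  rw [h]
  have h2 : ∀ j ∈ Finset.range n, (⟪Pproj w n u, w j⟫ : ℝ) • w j = ⟪u, w j⟫ • w j := by
    intro j hj
    rw [Pproj_inner w n hw u j, if_pos (Finset.mem_range.mp hj)]
  rw [Finset.sum_congr rfl h2]
  rfl

lemma Pproj_Q (hw : Orthonormal ℝ w) (u : H) :
    Pproj w n (u - Pproj w n u) = 0 := by
  rw [Pproj_sub, Pproj_idem w n hw, sub_self]

lemma inner_PQ (hw : Orthonormal ℝ w) (u : H) :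
    ⟪Pproj w n u, u - Pproj w n u⟫ = 0 := by
  set Q := u - Pproj w n u with hQ
  have h : Pproj w n u = ∑ j ∈ Finset.range n, ⟪u, w j⟫ • w j := rfl
  rw [h, sum_inner]
  refine Finset.sum_eq_zero (fun j hj => ?_)
  rw [real_inner_smul_left]
  have hz : ⟪w j, Q⟫ = 0 := by
    have h1 : ⟪w j, Pproj w n u⟫ = ⟪u, w j⟫ := by
      rw [real_inner_comm, Pproj_inner w n hw u j, if_pos (Finset.mem_range.mp hj)]
    have h2 : ⟪w j, u⟫ = ⟪u, w j⟫ := real_inner_comm _ _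
    rw [hQ, inner_sub_right, h1, h2, sub_self]
  rw [hz, mul_zero]

lemma pythagoras (hw : Orthonormal ℝ w) (u : H) :
    ‖u‖^2 = ‖Pproj w n u‖^2 + ‖u - Pproj w n u‖^2 := by
  have h : u = Pproj w n u + (u - Pproj w n u) := by abel
  calc ‖u‖^2 = ‖Pproj w n u + (u - Pproj w n u)‖^2 := by rw [← h]
  _ = ‖Pproj w n u‖^2 + 2*⟪Pproj w n u, u - Pproj w n u⟫ + ‖u - Pproj w n u‖^2 :=
      norm_add_sq_real _ _
  _ = _ := by rw [inner_PQ w n hw]; ring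

lemma Qnorm_le (hw : Orthonormal ℝ w) (u : H) : ‖u - Pproj w n u‖ ≤ ‖u‖ := by
  have := pythagoras w n hw u
  nlinarith [norm_nonneg (u - Pproj w n u), norm_nonneg u, sq_nonneg (‖Pproj w n u‖)]

end basic

section sums
variable {w : ℕ → H}

lemma coeff_of_hasSum (hw : Orthonormal ℝ w) {c : ℕ → ℝ} {y : H}
    (h : HasSum (fun j => c j • w j) y) (i : ℕ) : ⟪y, w i⟫ = c i := by
  have h1 : HasSum (fun j => ⟪w i, c j • w j⟫) ⟪w i, y⟫ := h.mapL (innerSL ℝ (w i))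
  have h2 : (fun j => (⟪w i, c j • w j⟫ : ℝ)) = fun j => if j = i then c i else 0 := by
    funext j
    rw [real_inner_smul_right, orthonormal_iff_ite.mp hw i j]
    by_cases hij : j = i
    · subst hij; simp
    · simp [hij, Ne.symm hij]
  rw [h2] at h1
  have h3 : HasSum (fun j => if j = i then c i else 0) (c i) := hasSum_ite_eq i (c i)
  rw [real_inner_comm]
  exact h1.unique h3

lemma normsq_of_hasSum (hw : Orthonormal ℝ w) {c : ℕ → ℝ} {y : H}
    (h : HasSum (fun j => c j • w j) y) : HasSum (fun j => c j ^ 2) (‖y‖^2) := by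
  have h1 : HasSum (fun j => ⟪y, c j • w j⟫) ⟪y, y⟫ := h.mapL (innerSL ℝ y)
  have h2 : (fun j => (⟪y, c j • w j⟫ : ℝ)) = fun j => c j ^ 2 := by
    funext j
    rw [real_inner_smul_right, coeff_of_hasSum hw h j]
    ring
  rw [h2] at h1
  rwa [real_inner_self_eq_norm_sq] at h1
end sums

section spectral
variable {w : ℕ → H} {l : ℕ → ℝ}

lemma exists_hasSum_of_sq_summable [CompleteSpace H] (hw : Orthonormal ℝ w)
    (hspan : ⊤ ≤ (Submodule.span ℝ (Set.range w)).topologicalClosure)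
    {c : ℕ → ℝ} (hc : Summable fun j => c j ^ 2) :
    ∃ y : H, HasSum (fun j => c j • w j) y := by
  set b : HilbertBasis ℕ ℝ H := HilbertBasis.mk hw hspan with hbdef
  have hb : ⇑b = w := HilbertBasis.coe_mk hw hspan
  have hmem : Memℓp c 2 := by
    apply memℓp_gen
    have heq : (fun i => ‖c i‖ ^ (2 : ENNReal).toReal) = fun i => c i ^ 2 := by
      funext i
      rw [show ((2 : ENNReal).toReal) = ((2:ℕ):ℝ) by simp, Real.rpow_natCast,
        Real.norm_eq_abs, sq_abs]
    rw [heq]; exact hc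
  set ξ : lp (fun _ : ℕ => ℝ) 2 := ⟨c, hmem⟩ with hξ
  refine ⟨b.repr.symm ξ, ?_⟩
  have h1 : HasSum (fun i => (ξ : ℕ → ℝ) i • b i) (b.repr.symm ξ) := b.hasSum_repr_symm ξ
  have h2 : (fun i => (ξ : ℕ → ℝ) i • b i) = fun i => c i • w i := by
    funext i
    rw [hb]
  rwa [h2] at h1

lemma hasSum_coeffs [CompleteSpace H] (hw : Orthonormal ℝ w)
    (hspan : ⊤ ≤ (Submodule.span ℝ (Set.range w)).topologicalClosure) (x : H) :
    HasSum (fun j => (⟪x, w j⟫ : ℝ) • w j) x := by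
  set b : HilbertBasis ℕ ℝ H := HilbertBasis.mk hw hspan with hbdef
  have hb : ⇑b = w := HilbertBasis.coe_mk hw hspan
  have h0 : HasSum (fun i => (b.repr x i : ℝ) • b i) x := b.hasSum_repr x
  have h1 : (fun i => (b.repr x i : ℝ) • b i) = fun i => (⟪x, w i⟫ : ℝ) • w i := by
    funext i
    rw [b.repr_apply_apply, hb, real_inner_comm]
  rwa [h1] at h0

lemma spectral_ineq [CompleteSpace H] (hw : Orthonormal ℝ w)
    (hspan : ⊤ ≤ (Submodule.span ℝ (Set.range w)).topologicalClosure)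
    (hmono : Monotone l) (hpos : ∀ j, 0 < l j) (n : ℕ) {x : H} (hx : x ∈ Dom w l 1) :
    l n * ‖x - Pproj w n x‖ ≤ ‖Apow w l 1 x‖ := by
  set a : ℕ → ℝ := fun j => ⟪x, w j⟫ with ha
  have hax : HasSum (fun j => a j • w j) x := hasSum_coeffs hw hspan x
  have hsq : Summable (fun j => (l j * a j)^2) := by
    have hx' : Summable (fun j => l j ^ ((2:ℝ) * 1) * a j ^ 2) := hx
    have heq : (fun j => l j ^ ((2:ℝ)*1) * a j^2) = fun j => (l j * a j)^2 := by
      funext j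
      rw [mul_one, show ((2:ℝ)) = ((2:ℕ):ℝ) by norm_num, Real.rpow_natCast]
      ring
    rwa [heq] at hx'
  obtain ⟨yA, hyA⟩ := exists_hasSum_of_sq_summable hw hspan hsq
  have hApow : Apow w l 1 x = yA := by
    have heq : (fun j => ((l j ^ (1:ℝ) * ⟪x, w j⟫ : ℝ)) • w j) = fun j => (l j * a j) • w j := by
      funext j; rw [Real.rpow_one]
    rw [Apow, heq, hyA.tsum_eq]
  have hfin : HasSum (fun j => (if j < n then a j else 0) • w j) (Pproj w n x) := by
    have hsupp : ∀ j ∉ Finset.range n, (if j < n then a j else 0) • w j = 0 := by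
      intro j hj
      rw [Finset.mem_range] at hj
      simp [hj]
    have h0 : HasSum (fun j => (if j < n then a j else 0) • w j)
        (∑ j ∈ Finset.range n, (if j < n then a j else 0) • w j) :=
      hasSum_sum_of_ne_finset_zero hsupp
    have h1 : ∑ j ∈ Finset.range n, (if j < n then a j else 0) • w j = Pproj w n x := by
      refine Finset.sum_congr rfl (fun j hj => ?_)
      rw [if_pos (Finset.mem_range.mp hj)]
    rwa [h1] at h0
  have hQ : HasSum (fun j => (if j < n then 0 else a j) • w j) (x - Pproj w n x) := by
    have h0 := hax.sub hfin
    have heq : (fun j => a j • w j - (if j < n then a j else 0) • w j)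
        = fun j => (if j < n then 0 else a j) • w j := by
      funext j
      by_cases hj : j < n <;> simp [hj]
    rwa [heq] at h0
  have hQsq : HasSum (fun j => (if j < n then 0 else a j)^2) (‖x - Pproj w n x‖^2) :=
    normsq_of_hasSum hw hQ
  have hAsq : HasSum (fun j => (l j * a j)^2) (‖yA‖^2) := normsq_of_hasSum hw hyA
  have hcomp : (l n)^2 * ‖x - Pproj w n x‖^2 ≤ ‖yA‖^2 := by
    have h1 : HasSum (fun j => (l n)^2 * (if j < n then 0 else a j)^2)
        ((l n)^2 * ‖x - Pproj w n x‖^2) := hQsq.mul_left _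
    refine hasSum_le (fun j => ?_) h1 hAsq
    by_cases hj : j < n
    · rw [if_pos hj]
      have h00 : (l n)^2 * (0:ℝ)^2 = 0 := by ring
      rw [h00]
      positivity
    · push_neg at hj
      rw [if_neg (not_lt.mpr hj)]
      have hln : (l n)^2 ≤ (l j)^2 := pow_le_pow_left₀ (hpos n).le (hmono hj) 2
      calc (l n)^2 * a j^2 ≤ (l j)^2 * a j^2 := mul_le_mul_of_nonneg_right hln (sq_nonneg _)
      _ = (l j * a j)^2 := by ring
  rw [hApow]
  have h2 : (l n * ‖x - Pproj w n x‖)^2 ≤ ‖yA‖^2 := by rw [mul_pow]; exact hcomp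
  have h3 : 0 ≤ ‖yA‖ := norm_nonneg _
  nlinarith [mul_nonneg (hpos n).le (norm_nonneg (x - Pproj w n x))]

lemma Dom_sub (hpos : ∀ j, 0 < l j) {u v : H} (hu : u ∈ Dom w l 1) (hv : v ∈ Dom w l 1) :
    u - v ∈ Dom w l 1 := by
  have hu' : Summable (fun j => l j ^ ((2:ℝ)*1) * ⟪u, w j⟫^2) := hu
  have hv' : Summable (fun j => l j ^ ((2:ℝ)*1) * ⟪v, w j⟫^2) := hv
  have h := (hu'.add hv').mul_left 2
  refine Summable.of_nonneg_of_le (fun j => ?_) (fun j => ?_) h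
  · have := Real.rpow_nonneg (hpos j).le ((2:ℝ)*1)
    positivity
  · rw [inner_sub_left]
    have hl : 0 ≤ l j ^ ((2:ℝ)*1) := Real.rpow_nonneg (hpos j).le _
    have hkey : (⟪u, w j⟫ - ⟪v, w j⟫)^2 ≤ 2*(⟪u, w j⟫^2 + ⟪v, w j⟫^2) := by
      nlinarith [sq_nonneg ((⟪u, w j⟫ : ℝ) + ⟪v, w j⟫)]
    calc l j ^ ((2:ℝ)*1) * (⟪u, w j⟫ - ⟪v, w j⟫)^2
        ≤ l j ^ ((2:ℝ)*1) * (2*(⟪u, w j⟫^2 + ⟪v, w j⟫^2)) :=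
          mul_le_mul_of_nonneg_left hkey hl
    _ = 2 * (l j ^ ((2:ℝ)*1) * ⟪u, w j⟫^2 + l j ^ ((2:ℝ)*1) * ⟪v, w j⟫^2) := by ring

lemma range_Pproj_separable (w : ℕ → H) (n : ℕ) :
    TopologicalSpace.IsSeparable (Set.range (Pproj w n)) := by
  set g : (Fin n → ℝ) → H := fun c => ∑ j : Fin n, c j • w (j:ℕ) with hg
  have hgc : Continuous g := by
    apply continuous_finset_sum
    exact fun j _ => (continuous_apply j).smul continuous_const
  have h1 : TopologicalSpace.IsSeparable (Set.univ : Set (Fin n → ℝ)) :=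
    TopologicalSpace.IsSeparable.of_separableSpace _
  have h2 : TopologicalSpace.IsSeparable (g '' Set.univ) := h1.image hgc
  apply h2.mono
  rintro _ ⟨u, rfl⟩
  refine ⟨fun j => ⟪u, w (j:ℕ)⟫, Set.mem_univ _, ?_⟩
  rw [hg]
  exact Fin.sum_univ_eq_sum_range (fun j => (⟪u, w j⟫ : ℝ) • w j) n

end spectral

/-- if `A` is `1`-log-Lipschitz on `𝒜 ⊆ D(A)` then for every `n` there is a
`1`-Lipschitz map `Φ_n : P_n H → Q_n H` such that `𝒜` lies within squared distance
`2 M₁² e^{-λ_{n+1}/(√2 C)}` of the graph of `Φ_n` (with `0`-based indexing, `λ_{n+1} = l n`). -/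
theorem statement10 [CompleteSpace H] (w : ℕ → H) (l : ℕ → ℝ)
    (hw : Orthonormal ℝ w)
    (hspan : ⊤ ≤ (Submodule.span ℝ (Set.range w)).topologicalClosure)
    (hmono : Monotone l) (hpos : ∀ j, 0 < l j)
    (hlim : Filter.Tendsto l Filter.atTop Filter.atTop)
    (𝒜 : Set H) (hsub : 𝒜 ⊆ Dom w l 1)
    (htwo : ∃ u ∈ 𝒜, ∃ v ∈ 𝒜, u ≠ v)
    (C M₁ : ℝ) (hC : 0 < C)
    (hM₁ : ∀ u ∈ 𝒜, 4 * ‖u‖ ≤ M₁)  -- `M₁ ≥ 4 sup_{u ∈ 𝒜} ‖u‖`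
    (hlog : ∀ u ∈ 𝒜, ∀ v ∈ 𝒜, u ≠ v →
      ‖Apow w l 1 (u - v)‖ ≤ C * ‖u - v‖ * Real.log (M₁ ^ 2 / ‖u - v‖ ^ 2)) :
    ∀ n : ℕ, ∃ Φn : H → H,
      (∀ p₁ ∈ Set.range (Pproj w n), ∀ p₂ ∈ Set.range (Pproj w n),
        ‖Φn p₁ - Φn p₂‖ ≤ ‖p₁ - p₂‖) ∧
      (∀ p ∈ Set.range (Pproj w n), Pproj w n (Φn p) = 0) ∧
      ∀ u ∈ 𝒜, ∃ p ∈ Set.range (Pproj w n),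
        ‖u - (p + Φn p)‖ ^ 2
          ≤ 2 * M₁ ^ 2 * Real.exp (-(l n) / (Real.sqrt 2 * C)) := by
  intro n
  classical
  set E := Real.exp (-(l n) / (Real.sqrt 2 * C)) with hE
  have hEpos : 0 < E := Real.exp_pos _
  obtain ⟨u₀, hu₀, v₀, hv₀, huv₀⟩ := htwo
  have hM₁pos : 0 < M₁ := by
    by_contra hM
    push_neg at hM
    have h1 := hM₁ u₀ hu₀
    have h2 := hM₁ v₀ hv₀
    have hn1 : ‖u₀‖ = 0 := le_antisymm (by linarith [norm_nonneg u₀]) (norm_nonneg u₀)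
    have hn2 : ‖v₀‖ = 0 := le_antisymm (by linarith [norm_nonneg v₀]) (norm_nonneg v₀)
    exact huv₀ (by rw [norm_eq_zero.mp hn1, norm_eq_zero.mp hn2])
  have hPzero : Pproj w n (0 : H) = 0 := by
    simp [Pproj]
  have hnegP : ∀ x : H, Pproj w n (-x) = - Pproj w n x := by
    intro x
    rw [show -x = (0:H) - x by abel, Pproj_sub, hPzero, zero_sub]
  -- the dichotomy estimate
  have hdich : ∀ u ∈ 𝒜, ∀ v ∈ 𝒜,
      ‖Pproj w n (u - v)‖ < ‖(u - v) - Pproj w n (u - v)‖ → ‖u - v‖^2 ≤ M₁^2 * E := by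
    intro u hu v hv hPQ
    by_cases huv : u = v
    · subst huv
      simp only [sub_self, norm_zero]
      rw [show ((0:ℝ))^2 = 0 by norm_num]
      positivity
    set x := u - v with hx
    have hx0 : x ≠ 0 := sub_ne_zero.mpr huv
    have hxnorm : 0 < ‖x‖ := norm_pos_iff.mpr hx0
    have hQpos : 0 < ‖x - Pproj w n x‖ := lt_of_le_of_lt (norm_nonneg _) hPQ
    have hpyth := pythagoras w n hw x
    have hx2 : ‖x‖^2 ≤ 2 * ‖x - Pproj w n x‖^2 := by
      nlinarith [norm_nonneg (Pproj w n x)]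
    have hxle : ‖x‖ ≤ Real.sqrt 2 * ‖x - Pproj w n x‖ := by
      have h2 : (Real.sqrt 2 * ‖x - Pproj w n x‖)^2 = 2 * ‖x - Pproj w n x‖^2 := by
        rw [mul_pow, Real.sq_sqrt (by norm_num : (0:ℝ) ≤ 2)]
      nlinarith [mul_nonneg (Real.sqrt_nonneg 2) (norm_nonneg (x - Pproj w n x)),
        norm_nonneg x]
    have hxM : ‖x‖ ≤ M₁ / 2 := by
      have h1 := hM₁ u hu
      have h2 := hM₁ v hv
      calc ‖x‖ ≤ ‖u‖ + ‖v‖ := norm_sub_le u v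
      _ ≤ M₁/2 := by linarith
    set L := Real.log (M₁^2 / ‖x‖^2) with hL
    have hratio : (4:ℝ) ≤ M₁^2 / ‖x‖^2 := by
      rw [le_div_iff₀ (by positivity)]
      nlinarith
    have hLpos : 0 < L := Real.log_pos (by linarith)
    have hspec := spectral_ineq hw hspan hmono hpos n (Dom_sub hpos (hsub hu) (hsub hv))
    have hlog' := hlog u hu v hv huv
    have hchain : l n * ‖x - Pproj w n x‖ ≤ Real.sqrt 2 * C * L * ‖x - Pproj w n x‖ := by
      calc l n * ‖x - Pproj w n x‖ ≤ ‖Apow w l 1 x‖ := hspec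
      _ ≤ C * ‖x‖ * L := hlog'
      _ ≤ C * (Real.sqrt 2 * ‖x - Pproj w n x‖) * L := by
        apply mul_le_mul_of_nonneg_right _ hLpos.le
        exact mul_le_mul_of_nonneg_left hxle hC.le
      _ = Real.sqrt 2 * C * L * ‖x - Pproj w n x‖ := by ring
    have hln : l n ≤ Real.sqrt 2 * C * L := le_of_mul_le_mul_right hchain hQpos
    have hsqrt2pos : 0 < Real.sqrt 2 := Real.sqrt_pos.mpr (by norm_num)
    have hLlb : l n / (Real.sqrt 2 * C) ≤ L := by
      rw [div_le_iff₀ (by positivity)]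
      nlinarith
    have hexp : Real.exp (l n / (Real.sqrt 2 * C)) ≤ M₁^2 / ‖x‖^2 := by
      calc Real.exp (l n / (Real.sqrt 2 * C)) ≤ Real.exp L := Real.exp_le_exp.mpr hLlb
      _ = M₁^2/‖x‖^2 := Real.exp_log (by positivity)
    have hmul : Real.exp (l n / (Real.sqrt 2 * C)) * ‖x‖^2 ≤ M₁^2 :=
      (le_div_iff₀ (by positivity)).mp hexp
    have hEeq : E = (Real.exp (l n / (Real.sqrt 2 * C)))⁻¹ := by
      rw [hE, ← Real.exp_neg]
      congr 1
      ring
    rw [hEeq, ← div_eq_mul_inv, le_div_iff₀ (Real.exp_pos _)]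
    nlinarith [Real.exp_pos (l n / (Real.sqrt 2 * C))]
  -- Zorn's lemma for a maximal "good" subset
  set R : H → H → Prop :=
    fun u v => ‖(u - v) - Pproj w n (u - v)‖ ≤ ‖Pproj w n (u - v)‖ with hR
  have hrefl : ∀ z : H, R z z := by
    intro z
    simp only [hR, sub_self, hPzero, norm_zero, sub_zero, le_refl]
  set SS : Set (Set H) := {B | B ⊆ 𝒜 ∧ ∀ u ∈ B, ∀ v ∈ B, R u v} with hSS
  have hsingle : {u₀} ∈ SS := by
    constructor
    · simpa using hu₀
    · intro u hu v hv
      rw [Set.mem_singleton_iff] at hu hv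
      subst hu; subst hv
      exact hrefl _
  obtain ⟨B, hu₀B, hBmax⟩ := zorn_subset_nonempty SS (fun c hcS hchain hcne => by
    refine ⟨⋃₀ c, ⟨Set.sUnion_subset (fun s hs => (hcS hs).1), ?_⟩,
      fun s hs => Set.subset_sUnion_of_mem hs⟩
    intro u hu v hv
    obtain ⟨su, hsu, hus⟩ := hu
    obtain ⟨sv, hsv, hvs⟩ := hv
    rcases hchain.total hsu hsv with h | h
    · exact (hcS hsv).2 u (h hus) v hvs
    · exact (hcS hsu).2 u hus v (h hvs)) {u₀} hsingle
  have hB𝒜 : B ⊆ 𝒜 := hBmax.prop.1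
  have hBpair : ∀ u ∈ B, ∀ v ∈ B, R u v := hBmax.prop.2
  have hBne : B.Nonempty := ⟨u₀, hu₀B rfl⟩
  -- every element of 𝒜 is close to B
  have hBdich : ∀ u ∈ 𝒜, ∃ v ∈ B, ‖u - v‖^2 ≤ M₁^2 * E := by
    intro u hu
    by_cases huB : u ∈ B
    · refine ⟨u, huB, ?_⟩
      simp only [sub_self, norm_zero]
      rw [show ((0:ℝ))^2 = 0 by norm_num]
      positivity
    · have hins : insert u B ∉ SS := by
        intro hmem
        have hsub2 : insert u B ⊆ B := hBmax.2 hmem (Set.subset_insert u B)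
        exact huB (hsub2 (Set.mem_insert u B))
      rw [hSS, Set.mem_setOf_eq] at hins
      push_neg at hins
      have hsub' : insert u B ⊆ 𝒜 := Set.insert_subset hu hB𝒜
      obtain ⟨a, ha, b, hb, hab⟩ := hins hsub'
      rcases Set.mem_insert_iff.mp ha with rfl | haB <;>
        rcases Set.mem_insert_iff.mp hb with hbu | hbB
      · exact absurd (hbu ▸ hrefl a) hab
      · exact ⟨b, hbB, hdich a hu b (hB𝒜 hbB) (not_le.mp hab)⟩
      · subst hbu
        refine ⟨a, haB, hdich b hu a (hB𝒜 haB) ?_⟩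
        have h1 : Pproj w n (b - a) = - Pproj w n (a - b) := by
          rw [show b - a = -(a - b) by abel, hnegP]
        have h2 : (b - a) - Pproj w n (b - a) = -((a - b) - Pproj w n (a - b)) := by
          rw [h1, show b - a = -(a - b) by abel]
          abel
        rw [h2, h1, norm_neg, norm_neg]
        exact not_le.mp hab
      · exact absurd (hBpair a haB b hbB) hab
  -- injectivity of Pproj on B
  have hPinj : ∀ a ∈ B, ∀ b ∈ B, Pproj w n a = Pproj w n b → a = b := by
    intro a ha b hb hP
    have h1 := hBpair a ha b hb
    have h2 : Pproj w n (a - b) = 0 := by rw [Pproj_sub, hP, sub_self]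
    rw [hR] at h1
    rw [h2, norm_zero] at h1
    have h4 : (a - b) - 0 = 0 := norm_le_zero_iff.mp h1
    rw [sub_zero] at h4
    exact sub_eq_zero.mp h4
  -- definitions for the extension
  set V := Set.range (Pproj w n) with hV
  set S' := Pproj w n '' B with hS'
  have hS'V : S' ⊆ V := by
    rintro _ ⟨v, _, rfl⟩
    exact ⟨v, rfl⟩
  have hS'ne : S'.Nonempty := hBne.image _
  have hpre : ∀ p : H, ∃ v : H, p ∈ S' → (v ∈ B ∧ Pproj w n v = p) := by
    intro p
    by_cases hp : p ∈ S'
    · obtain ⟨v, hv, hvp⟩ := hp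
      exact ⟨v, fun _ => ⟨hv, hvp⟩⟩
    · exact ⟨0, fun h => absurd h hp⟩
  choose σ hσ using hpre
  set f : H → H := fun p => σ p - Pproj w n (σ p) with hf
  have hflip : ∀ a ∈ S', ∀ b ∈ S', ‖f a - f b‖ ≤ ‖a - b‖ := by
    intro p₁ h₁ p₂ h₂
    obtain ⟨hσ₁B, hσ₁p⟩ := hσ p₁ h₁
    obtain ⟨hσ₂B, hσ₂p⟩ := hσ p₂ h₂
    have h3 : f p₁ - f p₂ = (σ p₁ - σ p₂) - Pproj w n (σ p₁ - σ p₂) := by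
      simp only [hf]
      rw [Pproj_sub]
      abel
    rw [h3]
    have h4 := hBpair (σ p₁) hσ₁B (σ p₂) hσ₂B
    rw [hR] at h4
    calc ‖(σ p₁ - σ p₂) - Pproj w n (σ p₁ - σ p₂)‖ ≤ ‖Pproj w n (σ p₁ - σ p₂)‖ := h4
    _ = ‖p₁ - p₂‖ := by rw [Pproj_sub, hσ₁p, hσ₂p]
  obtain ⟨F, hFlip, hFag⟩ :=
    lipschitz_extend hS'V (range_Pproj_separable w n) hS'ne f hflip
  refine ⟨fun p => F p - Pproj w n (F p), ?_, ?_, ?_⟩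
  · intro p₁ hp₁ p₂ hp₂
    have h1 : (F p₁ - Pproj w n (F p₁)) - (F p₂ - Pproj w n (F p₂))
        = (F p₁ - F p₂) - Pproj w n (F p₁ - F p₂) := by
      rw [Pproj_sub]
      abel
    rw [h1]
    exact le_trans (Qnorm_le w n hw _) (hFlip p₁ hp₁ p₂ hp₂)
  · intro p _
    exact Pproj_Q w n hw _
  · intro u hu
    obtain ⟨v, hvB, hbound⟩ := hBdich u hu
    refine ⟨Pproj w n v, ⟨v, rfl⟩, ?_⟩
    have hpS' : Pproj w n v ∈ S' := ⟨v, hvB, rfl⟩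
    have hFf : F (Pproj w n v) = f (Pproj w n v) := hFag _ hpS'
    obtain ⟨hσB, hσp⟩ := hσ (Pproj w n v) hpS'
    have hσv : σ (Pproj w n v) = v := hPinj _ hσB _ hvB hσp
    have hfval : f (Pproj w n v) = v - Pproj w n v := by
      simp only [hf, hσv]
    have hgraph : Pproj w n v + (F (Pproj w n v) - Pproj w n (F (Pproj w n v))) = v := by
      rw [hFf, hfval, Pproj_sub, Pproj_idem w n hw, sub_self, sub_zero]
      abel
    rw [hgraph]
    calc ‖u - v‖^2 ≤ M₁^2 * E := hbound
    _ ≤ 2*M₁^2*E := by nlinarith [sq_nonneg M₁]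

end
end

section
/- In the diagonal setting, let 𝒜 ⊆ ∩_{k≥1} D(A^k) be a set for which there exist constants M' > 0 and τ > 0 such that ‖A^k u‖² ≤ M' (4k)!/(2τ)^{4k} for every u ∈ 𝒜 and every integer k ≥ 1. Then A is 2-log-Lipschitz on 𝒜: there exist constants C > 0 and ε ∈ (0,1) such that for all u,v ∈ 𝒜 with 0 < ‖u − v‖ < ε, ‖A(u − v)‖ ≤ C ‖u − v‖ (log(1/‖u − v‖))². -/
open scoped RealInnerProductSpace

noncomputable section

variable {H : Type*} [NormedAddCommGroup H] [InnerProductSpace ℝ H]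

lemma ortho_series [CompleteSpace H] {w : ℕ → H} (hw : Orthonormal ℝ w) {c : ℕ → ℝ}
    (hc : Summable fun j => c j ^ 2) :
    Summable (fun j => c j • w j) ∧ ‖∑' j, c j • w j‖ ^ 2 = ∑' j, c j ^ 2 := by
  have hc' : Summable fun j => ‖c j‖ ^ 2 := by
    simpa [Real.norm_eq_abs, sq_abs] using hc
  have hsum : Summable (fun j => c j • w j) := by
    have := (hw.orthogonalFamily.summable_iff_norm_sq_summable c).2 hc'
    simpa [LinearIsometry.toSpanSingleton_apply] using this
  refine ⟨hsum, ?_⟩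
  have key : ∀ s : Finset ℕ, ‖∑ j ∈ s, c j • w j‖ ^ 2 = ∑ j ∈ s, c j ^ 2 := by
    intro s
    have := hw.orthogonalFamily.norm_sum c s
    simpa [LinearIsometry.toSpanSingleton_apply, Real.norm_eq_abs, sq_abs] using this
  have h1 : Filter.Tendsto (fun s : Finset ℕ => ‖∑ j ∈ s, c j • w j‖ ^ 2)
      Filter.atTop (nhds (‖∑' j, c j • w j‖ ^ 2)) :=
    (Filter.Tendsto.norm hsum.hasSum).pow 2
  have h1' : Filter.Tendsto (fun s : Finset ℕ => ∑ j ∈ s, c j ^ 2)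
      Filter.atTop (nhds (‖∑' j, c j • w j‖ ^ 2)) := by
    simpa only [key] using h1
  exact tendsto_nhds_unique h1' hc.hasSum

lemma rpow_coeff_sq {l : ℕ → ℝ} (hpos : ∀ j, 0 < l j) (α : ℝ) (j : ℕ) (t : ℝ) :
    (l j ^ α * t) ^ 2 = l j ^ (2 * α) * t ^ 2 := by
  have h : (l j ^ α) ^ 2 = l j ^ (2 * α) := by
    rw [sq, ← Real.rpow_add (hpos j)]; ring_nf
  rw [mul_pow, h]

lemma apow_coeff_summable {l : ℕ → ℝ} (hpos : ∀ j, 0 < l j) {α : ℝ} {c : ℕ → ℝ}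
    (h : Summable fun j => l j ^ (2 * α) * c j ^ 2) :
    Summable fun j => (l j ^ α * c j) ^ 2 := by
  simpa only [rpow_coeff_sq hpos] using h

lemma apow_norm_sq [CompleteSpace H] {w : ℕ → H} (hw : Orthonormal ℝ w) {l : ℕ → ℝ}
    (hpos : ∀ j, 0 < l j) (α : ℝ) (u : H)
    (h : Summable fun j => l j ^ (2 * α) * ⟪u, w j⟫ ^ 2) :
    ‖Apow w l α u‖ ^ 2 = ∑' j, l j ^ (2 * α) * ⟪u, w j⟫ ^ 2 := by
  have h2 := (ortho_series hw (apow_coeff_summable hpos h)).2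
  rw [Apow, h2]
  exact tsum_congr fun j => rpow_coeff_sq hpos α j _

lemma apow_sub [CompleteSpace H] {w : ℕ → H} (hw : Orthonormal ℝ w) {l : ℕ → ℝ}
    (hpos : ∀ j, 0 < l j) (α : ℝ) (u v : H)
    (hu : Summable fun j => l j ^ (2 * α) * ⟪u, w j⟫ ^ 2)
    (hv : Summable fun j => l j ^ (2 * α) * ⟪v, w j⟫ ^ 2) :
    Apow w l α (u - v) = Apow w l α u - Apow w l α v := by
  have hsu := (ortho_series hw (apow_coeff_summable hpos hu)).1
  have hsv := (ortho_series hw (apow_coeff_summable hpos hv)).1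
  rw [Apow, Apow, Apow, ← (hsu.hasSum.sub hsv.hasSum).tsum_eq]
  exact tsum_congr fun j => by rw [inner_sub_left, mul_sub, sub_smul]

lemma dom_sub {w : ℕ → H} {l : ℕ → ℝ} (hpos : ∀ j, 0 < l j) {α : ℝ} {u v : H}
    (hu : Summable fun j => l j ^ (2 * α) * ⟪u, w j⟫ ^ 2)
    (hv : Summable fun j => l j ^ (2 * α) * ⟪v, w j⟫ ^ 2) :
    Summable fun j => l j ^ (2 * α) * ⟪u - v, w j⟫ ^ 2 := by
  refine Summable.of_nonneg_of_le (fun j => ?_) (fun j => ?_)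
    (((hu.mul_left 2)).add ((hv.mul_left 2)))
  · exact mul_nonneg (Real.rpow_nonneg (hpos j).le _) (sq_nonneg _)
  · have hP : (0:ℝ) ≤ l j ^ (2 * α) := Real.rpow_nonneg (hpos j).le _
    rw [inner_sub_left]
    nlinarith [sq_nonneg (⟪u, w j⟫ + ⟪v, w j⟫), sq_nonneg (⟪u, w j⟫ - ⟪v, w j⟫),
      mul_nonneg hP (sq_nonneg (⟪u, w j⟫ + ⟪v, w j⟫))]

/-- The elementary splitting inequality, summed. -/
lemma split_tsum {l : ℕ → ℝ} (hpos : ∀ j, 0 < l j) (c : ℕ → ℝ) (k : ℕ) (hk : 1 ≤ k)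
    {Λ : ℝ} (hΛ : 0 < Λ)
    (h1 : Summable fun j => l j ^ (2 * (1:ℝ)) * c j ^ 2)
    (hks : Summable fun j => l j ^ (2 * (k:ℝ)) * c j ^ 2)
    (hc : Summable fun j => c j ^ 2) :
    (∑' j, l j ^ (2 * (1:ℝ)) * c j ^ 2) ≤
      Λ ^ 2 * (∑' j, c j ^ 2) + (∑' j, l j ^ (2 * (k:ℝ)) * c j ^ 2) / Λ ^ (2 * k - 2) := by
  have hterm : ∀ j, l j ^ (2 * (1:ℝ)) * c j ^ 2 ≤
      Λ ^ 2 * c j ^ 2 + (l j ^ (2 * (k:ℝ)) * c j ^ 2) / Λ ^ (2 * k - 2) := by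
    intro j
    have hc2 : (0:ℝ) ≤ c j ^ 2 := sq_nonneg _
    have ha : 0 < l j := hpos j
    have e1 : l j ^ (2 * (1:ℝ)) = l j ^ (2:ℕ) := by
      rw [show (2 * (1:ℝ)) = ((2:ℕ):ℝ) from by norm_num, Real.rpow_natCast]
    have e2 : l j ^ (2 * (k:ℝ)) = l j ^ (2 * k : ℕ) := by
      rw [show (2 * (k:ℝ)) = ((2 * k : ℕ):ℝ) from by push_cast; ring, Real.rpow_natCast]
    rw [e1, e2]
    rcases le_or_gt (l j) Λ with hle | hlt
    · have hA : l j ^ (2:ℕ) * c j ^ 2 ≤ Λ ^ 2 * c j ^ 2 :=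
        mul_le_mul_of_nonneg_right (pow_le_pow_left₀ ha.le hle 2) hc2
      have hB : (0:ℝ) ≤ l j ^ (2 * k : ℕ) * c j ^ 2 / Λ ^ (2 * k - 2) := by positivity
      linarith
    · have hA : l j ^ (2:ℕ) ≤ l j ^ (2 * k : ℕ) / Λ ^ (2 * k - 2) := by
        rw [le_div_iff₀ (pow_pos hΛ _)]
        calc l j ^ (2:ℕ) * Λ ^ (2 * k - 2)
            ≤ l j ^ (2:ℕ) * l j ^ (2 * k - 2) :=
              mul_le_mul_of_nonneg_left (pow_le_pow_left₀ hΛ.le hlt.le _) (by positivity)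
          _ = l j ^ (2 * k : ℕ) := by rw [← pow_add]; congr 1; omega
      have hB : l j ^ (2:ℕ) * c j ^ 2 ≤
          l j ^ (2 * k : ℕ) * c j ^ 2 / Λ ^ (2 * k - 2) := by
        have := mul_le_mul_of_nonneg_right hA hc2
        calc l j ^ (2:ℕ) * c j ^ 2
            ≤ (l j ^ (2 * k : ℕ) / Λ ^ (2 * k - 2)) * c j ^ 2 := this
          _ = l j ^ (2 * k : ℕ) * c j ^ 2 / Λ ^ (2 * k - 2) := by ring
      have hC : (0:ℝ) ≤ Λ ^ 2 * c j ^ 2 := by positivity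
      linarith
  have hsum2 : Summable fun j => Λ ^ 2 * c j ^ 2 +
      (l j ^ (2 * (k:ℝ)) * c j ^ 2) / Λ ^ (2 * k - 2) :=
    (hc.mul_left _).add (hks.div_const _)
  have step1 := Summable.tsum_le_tsum hterm h1 hsum2
  have step2 : (∑' j, (Λ ^ 2 * c j ^ 2 +
      (l j ^ (2 * (k:ℝ)) * c j ^ 2) / Λ ^ (2 * k - 2))) =
      Λ ^ 2 * (∑' j, c j ^ 2) + (∑' j, l j ^ (2 * (k:ℝ)) * c j ^ 2) / Λ ^ (2 * k - 2) := by
    rw [Summable.tsum_add (hc.mul_left _) (hks.div_const _), tsum_mul_left, tsum_div_const]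
  linarith [step1, le_of_eq step2, ge_of_eq step2]

/-- Bounding the Gevrey constant. -/
lemma gevrey_bound {M' τ : ℝ} (hM' : 0 < M') (hτ : 0 < τ) (k : ℕ) :
    2 * Real.sqrt (M' * (Nat.factorial (4 * k) : ℝ) / (2 * τ) ^ (4 * k)) ≤
      max 1 (2 * Real.sqrt M') * (4 * (k:ℝ) ^ 2 / τ ^ 2) ^ k := by
  set β : ℝ := 4 * (k:ℝ) ^ 2 / τ ^ 2 with hβdef
  have hβ : 0 ≤ β := by positivity
  have hfac : ((Nat.factorial (4 * k) : ℕ) : ℝ) ≤ ((4 * k : ℕ) : ℝ) ^ (4 * k) := by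
    exact_mod_cast Nat.factorial_le_pow (4 * k)
  have key : ((4 * k : ℕ) : ℝ) ^ (4 * k) = β ^ (2 * k) * (2 * τ) ^ (4 * k) := by
    have h1 : ((4 * k : ℕ) : ℝ) = 4 * (k:ℝ) := by push_cast; ring
    rw [h1]
    have h2 : (4 * (k:ℝ)) ^ (4 * k) = ((4 * (k:ℝ)) / (2 * τ)) ^ (4 * k) * (2 * τ) ^ (4 * k) := by
      rw [div_pow, div_mul_cancel₀]
      positivity
    rw [h2]
    congr 1
    rw [show 4 * k = 2 * (2 * k) from by ring, pow_mul]
    congr 1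
    rw [hβdef]
    rw [div_pow, mul_pow]
    field_simp
    ring
  have hq_le : M' * (Nat.factorial (4 * k) : ℝ) / (2 * τ) ^ (4 * k) ≤ M' * β ^ (2 * k) := by
    rw [div_le_iff₀ (by positivity)]
    calc M' * ((Nat.factorial (4 * k) : ℕ) : ℝ)
        ≤ M' * (((4 * k : ℕ) : ℝ) ^ (4 * k)) := mul_le_mul_of_nonneg_left hfac hM'.le
      _ = M' * β ^ (2 * k) * (2 * τ) ^ (4 * k) := by rw [key]; ring
  have hs1 := Real.sqrt_le_sqrt hq_le
  have hs2 : Real.sqrt (M' * β ^ (2 * k)) = Real.sqrt M' * β ^ k := by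
    rw [Real.sqrt_mul hM'.le, show 2 * k = k * 2 from by ring, pow_mul,
      Real.sqrt_sq (pow_nonneg hβ k)]
  have hM₀2 : 2 * Real.sqrt M' ≤ max 1 (2 * Real.sqrt M') := le_max_right _ _
  have hβk : (0:ℝ) ≤ β ^ k := pow_nonneg hβ k
  calc 2 * Real.sqrt (M' * (Nat.factorial (4 * k) : ℝ) / (2 * τ) ^ (4 * k))
      ≤ 2 * (Real.sqrt M' * β ^ k) := by
        rw [← hs2]; linarith
    _ = (2 * Real.sqrt M') * β ^ k := by ring
    _ ≤ max 1 (2 * Real.sqrt M') * β ^ k := mul_le_mul_of_nonneg_right hM₀2 hβk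

/-- Choice of the cutoff parameter. -/
lemma lambda_exists {M₀ : ℝ} (hM₀ : 1 ≤ M₀) {β : ℝ} (hβ : 0 < β) {L : ℝ} (hL0 : 0 ≤ L)
    {k : ℕ} (hk1 : 1 ≤ k) (hLk : L ≤ (k:ℝ)) :
    ∃ Λ : ℝ, 0 < Λ ∧ Real.exp L * M₀ * β ^ k ≤ Λ ^ k ∧ Λ ≤ Real.exp 1 * M₀ * β := by
  have hM₀pos : (0:ℝ) < M₀ := lt_of_lt_of_le one_pos hM₀
  have hkpos : (0:ℝ) < (k:ℝ) := by exact_mod_cast hk1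
  refine ⟨Real.exp (L / (k:ℝ)) * M₀ ^ ((1:ℝ)/(k:ℝ)) * β, ?_, ?_, ?_⟩
  · exact mul_pos (mul_pos (Real.exp_pos _) (Real.rpow_pos_of_pos hM₀pos _)) hβ
  · have hexpk : (Real.exp (L / (k:ℝ))) ^ k = Real.exp L := by
      rw [← Real.exp_nat_mul]
      congr 1
      field_simp
    have hMk : (M₀ ^ ((1:ℝ)/(k:ℝ))) ^ k = M₀ := by
      rw [← Real.rpow_natCast (M₀ ^ ((1:ℝ)/(k:ℝ))) k, ← Real.rpow_mul hM₀pos.le,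
        one_div, inv_mul_cancel₀ (ne_of_gt hkpos), Real.rpow_one]
    rw [mul_pow, mul_pow, hexpk, hMk]
  · have h1 : Real.exp (L / (k:ℝ)) ≤ Real.exp 1 :=
      Real.exp_le_exp.2 (by rw [div_le_one hkpos]; exact hLk)
    have h2 : M₀ ^ ((1:ℝ)/(k:ℝ)) ≤ M₀ := by
      calc M₀ ^ ((1:ℝ)/(k:ℝ)) ≤ M₀ ^ (1:ℝ) :=
            Real.rpow_le_rpow_of_exponent_le hM₀
              (by rw [div_le_one hkpos]; exact_mod_cast Nat.one_le_cast.2 hk1)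
        _ = M₀ := Real.rpow_one M₀
    have h3 : (0:ℝ) ≤ M₀ ^ ((1:ℝ)/(k:ℝ)) := (Real.rpow_pos_of_pos hM₀pos _).le
    exact mul_le_mul (mul_le_mul h1 h2 h3 (Real.exp_pos 1).le) le_rfl hβ.le (by positivity)

/-- Bounding the tail term. -/
lemma second_term {Λ G X L : ℝ} (hΛ : 0 < Λ) (hG : 0 < G) {k : ℕ} (hk : 1 ≤ k)
    (hΛk : Real.exp L * G ≤ Λ ^ k) (hX : X = Real.exp (-L)) :
    G ^ 2 / Λ ^ (2 * k - 2) ≤ Λ ^ 2 * X ^ 2 := by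
  have h1 : (Real.exp L * G) ^ 2 ≤ (Λ ^ k) ^ 2 := pow_le_pow_left₀ (by positivity) hΛk 2
  have h2 : Λ ^ (2 * k) = Λ ^ (2 * k - 2) * Λ ^ 2 := by rw [← pow_add]; congr 1; omega
  have h3 : (Λ ^ k) ^ 2 = Λ ^ (2 * k) := by rw [← pow_mul]; congr 1; ring
  have h4 : Real.exp L ^ 2 * X ^ 2 = 1 := by
    rw [hX, ← mul_pow, ← Real.exp_add]
    rw [show L + -L = 0 from by ring, Real.exp_zero, one_pow]
  rw [div_le_iff₀ (pow_pos hΛ _)]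
  calc G ^ 2 = (Real.exp L ^ 2 * X ^ 2) * G ^ 2 := by rw [h4, one_mul]
    _ = ((Real.exp L * G) ^ 2) * X ^ 2 := by ring
    _ ≤ (Λ ^ k) ^ 2 * X ^ 2 := mul_le_mul_of_nonneg_right h1 (sq_nonneg X)
    _ = Λ ^ 2 * X ^ 2 * Λ ^ (2 * k - 2) := by rw [h3, h2]; ring

lemma sqrt_two_bound {a b : ℝ} (ha : 0 ≤ a) (hb : 0 ≤ b) (h : a ^ 2 ≤ 2 * b ^ 2) :
    a ≤ Real.sqrt 2 * b := by
  calc a = Real.sqrt (a ^ 2) := (Real.sqrt_sq ha).symm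
    _ ≤ Real.sqrt (2 * b ^ 2) := Real.sqrt_le_sqrt h
    _ = Real.sqrt 2 * b := by rw [Real.sqrt_mul (by norm_num), Real.sqrt_sq hb]

/-- if `𝒜 ⊆ ∩_k D(A^k)` satisfies the Gevrey-type bounds
`‖A^k u‖² ≤ M' (4k)!/(2τ)^{4k}` for all `u ∈ 𝒜` and `k ≥ 1`, then `A` is `2`-log-Lipschitz
on `𝒜`: `‖A(u-v)‖ ≤ C ‖u-v‖ (log(1/‖u-v‖))²` whenever `0 < ‖u-v‖ < ε`. -/
theorem statement14 [CompleteSpace H] (w : ℕ → H) (l : ℕ → ℝ)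
    (hw : Orthonormal ℝ w)
    (hspan : ⊤ ≤ (Submodule.span ℝ (Set.range w)).topologicalClosure)
    (hmono : Monotone l) (hpos : ∀ j, 0 < l j)
    (hlim : Filter.Tendsto l Filter.atTop Filter.atTop)
    (𝒜 : Set H)
    (hsub : ∀ k : ℕ, 1 ≤ k → 𝒜 ⊆ Dom w l (k : ℝ))
    (M' τ : ℝ) (hM' : 0 < M') (hτ : 0 < τ)
    (hGevrey : ∀ u ∈ 𝒜, ∀ k : ℕ, 1 ≤ k →
      ‖Apow w l (k : ℝ) u‖ ^ 2
        ≤ M' * (Nat.factorial (4 * k) : ℝ) / (2 * τ) ^ (4 * k)) :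
    ∃ C : ℝ, 0 < C ∧ ∃ ε : ℝ, 0 < ε ∧ ε < 1 ∧
      ∀ u ∈ 𝒜, ∀ v ∈ 𝒜, 0 < ‖u - v‖ → ‖u - v‖ < ε →
        ‖Apow w l 1 (u - v)‖
          ≤ C * ‖u - v‖ * Real.log (1 / ‖u - v‖) ^ 2 := by
  classical
  have hM₀1 : (1:ℝ) ≤ max 1 (2 * Real.sqrt M') := le_max_left _ _
  have hM₀pos : (0:ℝ) < max 1 (2 * Real.sqrt M') := lt_of_lt_of_le one_pos hM₀1
  have hε1 : Real.exp (-1) < 1 := by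
    rw [Real.exp_lt_one_iff]; norm_num
  refine ⟨16 * Real.sqrt 2 * Real.exp 1 * max 1 (2 * Real.sqrt M') / τ ^ 2, by positivity,
    Real.exp (-1), Real.exp_pos _, hε1, ?_⟩
  intro u hu v hv hX0 hXε
  obtain ⟨X, hXdef⟩ : ∃ X : ℝ, X = ‖u - v‖ := ⟨_, rfl⟩
  rw [← hXdef] at hX0 hXε ⊢
  obtain ⟨L, hLdef⟩ : ∃ L : ℝ, L = Real.log (1 / X) := ⟨_, rfl⟩
  rw [← hLdef]
  -- basic facts about L
  have hL : 1 < L := by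
    rw [hLdef]
    have h1 : Real.exp 1 < 1 / X := by
      rw [lt_div_iff₀ hX0]
      calc Real.exp 1 * X < Real.exp 1 * Real.exp (-1) :=
            mul_lt_mul_of_pos_left hXε (Real.exp_pos 1)
        _ = 1 := by rw [← Real.exp_add]; norm_num
    calc (1:ℝ) = Real.log (Real.exp 1) := (Real.log_exp 1).symm
      _ < Real.log (1 / X) := Real.log_lt_log (Real.exp_pos 1) h1
  have hLpos : 0 < L := lt_trans one_pos hL
  have hXexp : X = Real.exp (-L) := by
    rw [hLdef, one_div, Real.log_inv, neg_neg, Real.exp_log hX0]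
  obtain ⟨k, hk1, hLk, hk2L⟩ :
      ∃ k : ℕ, 1 ≤ k ∧ L ≤ (k:ℝ) ∧ (k:ℝ) ≤ 2 * L := by
    refine ⟨⌈L⌉₊, Nat.one_le_ceil_iff.2 hLpos, Nat.le_ceil L, ?_⟩
    have := Nat.ceil_lt_add_one hLpos.le
    linarith
  have hkpos : (0:ℝ) < (k:ℝ) := by exact_mod_cast hk1
  -- summability facts
  have hu1 := hsub 1 le_rfl hu
  have hv1 := hsub 1 le_rfl hv
  have huk := hsub k hk1 hu
  have hvk := hsub k hk1 hv
  simp only [Dom, Set.mem_setOf_eq, Nat.cast_one] at hu1 hv1 huk hvk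
  have hr1 : Summable fun j => l j ^ (2 * (1:ℝ)) * ⟪u - v, w j⟫ ^ 2 := dom_sub hpos hu1 hv1
  have hrk : Summable fun j => l j ^ (2 * (k:ℝ)) * ⟪u - v, w j⟫ ^ 2 := dom_sub hpos huk hvk
  -- Bessel
  have hinner : ∀ j, ⟪w j, u - v⟫ = ⟪u - v, w j⟫ := fun j => real_inner_comm _ _
  have hc2sum : Summable fun j => ⟪u - v, w j⟫ ^ 2 := by
    have := hw.inner_products_summable (x := u - v)
    simpa [Real.norm_eq_abs, sq_abs, hinner] using this
  have hbessel : (∑' j, ⟪u - v, w j⟫ ^ 2) ≤ X ^ 2 := by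
    rw [hXdef]
    have := hw.tsum_inner_products_le (u - v)
    simpa [Real.norm_eq_abs, sq_abs, hinner] using this
  -- the Gevrey constant
  obtain ⟨G, hGdef⟩ :
      ∃ G : ℝ, G = 2 * Real.sqrt (M' * (Nat.factorial (4 * k) : ℝ) / (2 * τ) ^ (4 * k)) :=
    ⟨_, rfl⟩
  have hfacpos : (0:ℝ) < (Nat.factorial (4 * k) : ℝ) := by
    exact_mod_cast Nat.factorial_pos (4 * k)
  have hqpos : (0:ℝ) < M' * (Nat.factorial (4 * k) : ℝ) / (2 * τ) ^ (4 * k) :=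
    div_pos (mul_pos hM' hfacpos) (by positivity)
  have hGpos : 0 < G := by
    rw [hGdef]; exact mul_pos two_pos (Real.sqrt_pos.2 hqpos)
  have hnormu : ‖Apow w l (k:ℝ) u‖ ≤
      Real.sqrt (M' * (Nat.factorial (4 * k) : ℝ) / (2 * τ) ^ (4 * k)) := by
    rw [← Real.sqrt_sq (norm_nonneg _)]
    exact Real.sqrt_le_sqrt (hGevrey u hu k hk1)
  have hnormv : ‖Apow w l (k:ℝ) v‖ ≤
      Real.sqrt (M' * (Nat.factorial (4 * k) : ℝ) / (2 * τ) ^ (4 * k)) := by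
    rw [← Real.sqrt_sq (norm_nonneg _)]
    exact Real.sqrt_le_sqrt (hGevrey v hv k hk1)
  have hGr : ‖Apow w l (k:ℝ) (u - v)‖ ≤ G := by
    rw [apow_sub hw hpos _ u v huk hvk, hGdef]
    have := norm_sub_le (Apow w l (k:ℝ) u) (Apow w l (k:ℝ) v)
    linarith only [this, hnormu, hnormv]
  -- norm identities
  have hSk_eq : ‖Apow w l (k:ℝ) (u - v)‖ ^ 2 = ∑' j, l j ^ (2 * (k:ℝ)) * ⟪u - v, w j⟫ ^ 2 :=
    apow_norm_sq hw hpos _ _ hrk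
  have hSk_le : (∑' j, l j ^ (2 * (k:ℝ)) * ⟪u - v, w j⟫ ^ 2) ≤ G ^ 2 := by
    rw [← hSk_eq]; exact pow_le_pow_left₀ (norm_nonneg _) hGr 2
  have hS1_eq : ‖Apow w l 1 (u - v)‖ ^ 2 = ∑' j, l j ^ (2 * (1:ℝ)) * ⟪u - v, w j⟫ ^ 2 :=
    apow_norm_sq hw hpos 1 _ hr1
  -- cutoff parameter
  have hβpos : (0:ℝ) < 4 * (k:ℝ) ^ 2 / τ ^ 2 := by positivity
  obtain ⟨Λ, hΛpos, hΛk', hΛle⟩ := lambda_exists hM₀1 hβpos hLpos.le hk1 hLk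
  have hGβ : G ≤ max 1 (2 * Real.sqrt M') * (4 * (k:ℝ) ^ 2 / τ ^ 2) ^ k := by
    rw [hGdef]; exact gevrey_bound hM' hτ k
  have hΛk : Real.exp L * G ≤ Λ ^ k := by
    have h1 : Real.exp L * G ≤ Real.exp L * (max 1 (2 * Real.sqrt M') *
        (4 * (k:ℝ) ^ 2 / τ ^ 2) ^ k) := mul_le_mul_of_nonneg_left hGβ (Real.exp_pos L).le
    have h2 : Real.exp L * (max 1 (2 * Real.sqrt M') * (4 * (k:ℝ) ^ 2 / τ ^ 2) ^ k) =
        Real.exp L * max 1 (2 * Real.sqrt M') * (4 * (k:ℝ) ^ 2 / τ ^ 2) ^ k :=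
      (mul_assoc _ _ _).symm
    linarith only [h1, h2, hΛk']
  have hsecond := second_term hΛpos hGpos hk1 hΛk hXexp
  -- assemble the splitting inequality
  have hsplit := split_tsum hpos (fun j => ⟪u - v, w j⟫) k hk1 hΛpos hr1 hrk hc2sum
  beta_reduce at hsplit
  have hA : Λ ^ 2 * (∑' j, ⟪u - v, w j⟫ ^ 2) ≤ Λ ^ 2 * X ^ 2 :=
    mul_le_mul_of_nonneg_left hbessel (sq_nonneg Λ)
  have hB : (∑' j, l j ^ (2 * (k:ℝ)) * ⟪u - v, w j⟫ ^ 2) / Λ ^ (2 * k - 2) ≤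
      G ^ 2 / Λ ^ (2 * k - 2) :=
    (div_le_div_iff_of_pos_right (pow_pos hΛpos _)).2 hSk_le
  have hfinal2 : ‖Apow w l 1 (u - v)‖ ^ 2 ≤ 2 * (Λ * X) ^ 2 := by
    rw [hS1_eq]
    have he : Λ ^ 2 * X ^ 2 + Λ ^ 2 * X ^ 2 = 2 * (Λ * X) ^ 2 := by ring
    have h9 := add_le_add hA (le_trans hB hsecond)
    exact (hsplit.trans h9).trans he.le
  have hnorm_le : ‖Apow w l 1 (u - v)‖ ≤ Real.sqrt 2 * (Λ * X) :=
    sqrt_two_bound (norm_nonneg _) (by positivity) hfinal2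
  -- final constant chase
  have hβL : 4 * (k:ℝ) ^ 2 / τ ^ 2 ≤ 16 * L ^ 2 / τ ^ 2 := by
    have hk2 : (k:ℝ) ^ 2 ≤ (2 * L) ^ 2 := pow_le_pow_left₀ hkpos.le hk2L 2
    have h4 : 4 * (k:ℝ) ^ 2 ≤ 16 * L ^ 2 := by
      have he2 : (2 * L) ^ 2 = 4 * L ^ 2 := by ring
      linarith only [hk2, he2]
    exact (div_le_div_iff_of_pos_right (by positivity)).2 h4
  have hΛle2 : Λ ≤ Real.exp 1 * max 1 (2 * Real.sqrt M') * (16 * L ^ 2 / τ ^ 2) :=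
    le_trans hΛle (mul_le_mul_of_nonneg_left hβL (by positivity))
  have h7 : Real.sqrt 2 * (Λ * X) ≤
      Real.sqrt 2 * ((Real.exp 1 * max 1 (2 * Real.sqrt M') * (16 * L ^ 2 / τ ^ 2)) * X) :=
    mul_le_mul_of_nonneg_left (mul_le_mul_of_nonneg_right hΛle2 hX0.le) (Real.sqrt_nonneg 2)
  have h8 : Real.sqrt 2 * ((Real.exp 1 * max 1 (2 * Real.sqrt M') * (16 * L ^ 2 / τ ^ 2)) * X) =
      16 * Real.sqrt 2 * Real.exp 1 * max 1 (2 * Real.sqrt M') / τ ^ 2 * X * L ^ 2 := by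
    ring
  linarith only [hnorm_le, h7, le_of_eq h8]

end
end
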